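/- Let k ≥ 5 and let H be a disjoint union of t ≥ 2 vertex-disjoint paths, with n_i(H) the order of the i-th longest path. The join K_2 + H contains no Theta graph on k vertices as a subgraph if and only if n_1(H) + n_2(H) ≤ k−3. -/

import Mathlib

open SimpleGraph

/-- The adjacency spectral radius of a finite simple graph. -/
noncomputable def specRad {V : Type*} [Fintype V] [DecidableEq V] (G : SimpleGraph V) : ℝ :=
  letI := Classical.decRel G.Adj
  sSup ((fun μ : ℝ => |μ|) '' spectrum ℝ (G.adjMatrix ℝ))

/-- `G` contains a copy of `H` as a subgraph. -/
def Contains {V W : Type*} (G : SimpleGraph V) (H : SimpleGraph W) : Prop :=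
  ∃ f : W ↪ V, ∀ a b, H.Adj a b → G.Adj (f a) (f b)

/-- `G` contains `C_{l,l}`: two cycles of length `l` sharing exactly one vertex. -/
def ContainsCll {V : Type*} (G : SimpleGraph V) (l : ℕ) : Prop :=
  ∃ (u : V) (c₁ c₂ : G.Walk u u), c₁.IsCycle ∧ c₂.IsCycle ∧ c₁.length = l ∧ c₂.length = l ∧
    ∀ v, v ∈ c₁.support → v ∈ c₂.support → v = u

/-- Theta graph on `k` vertices: the cycle `0,1,…,k-1` plus a chord from `0` to `a`. -/
def thetaGraph (k a : ℕ) : SimpleGraph (Fin k) :=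
  SimpleGraph.fromRel (fun i j =>
    (j : ℕ) = (i : ℕ) + 1 ∨ ((i : ℕ) = k - 1 ∧ (j : ℕ) = 0) ∨ ((i : ℕ) = 0 ∧ (j : ℕ) = a))

/-- `G` contains some member of `Θ_k`, the set of Theta graphs on `k` vertices. -/
def ContainsTheta {V : Type*} (G : SimpleGraph V) (k : ℕ) : Prop :=
  ∃ a, 2 ≤ a ∧ a ≤ k - 2 ∧ Contains G (thetaGraph k a)

/-- The join of two graphs: all edges between the two vertex sets are added. -/
def joinG {V W : Type*} (G : SimpleGraph V) (H : SimpleGraph W) : SimpleGraph (V ⊕ W) where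
  Adj a b := match a, b with
    | Sum.inl a, Sum.inl b => G.Adj a b
    | Sum.inr a, Sum.inr b => H.Adj a b
    | Sum.inl _, Sum.inr _ => True
    | Sum.inr _, Sum.inl _ => True
  symm := by
    constructor
    rintro (a | a) (b | b) h
    · exact h.symm
    · trivial
    · trivial
    · exact h.symm
  loopless := by
    constructor
    rintro (a | a) h
    · exact G.irrefl h
    · exact H.irrefl h

/-- The disjoint union of `t` paths, the `i`-th having `f i` vertices. -/
def pathsUnion (t : ℕ) (f : ℕ → ℕ) : SimpleGraph (Σ i : Fin t, Fin (f i.1)) where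
  Adj a b := a.1 = b.1 ∧ ((a.2 : ℕ) + 1 = (b.2 : ℕ) ∨ (b.2 : ℕ) + 1 = (a.2 : ℕ))
  symm := by
    constructor
    rintro ⟨i, a⟩ ⟨j, b⟩ ⟨h₁, h₂⟩
    exact ⟨h₁.symm, h₂.symm⟩
  loopless := by
    constructor
    rintro ⟨i, a⟩ ⟨-, h⟩
    omega

/-- `H` is a minor of `G`: disjoint connected branch sets, one for each vertex of `H`,
with edges of `G` between branch sets corresponding to edges of `H`. -/
def IsMinor {V W : Type*} (H : SimpleGraph W) (G : SimpleGraph V) : Prop :=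
  ∃ B : W → Set V, (∀ w, (B w).Nonempty) ∧ (∀ w, (G.induce (B w)).Connected) ∧
    (∀ w₁ w₂, w₁ ≠ w₂ → Disjoint (B w₁) (B w₂)) ∧
    ∀ w₁ w₂, H.Adj w₁ w₂ → ∃ v₁ ∈ B w₁, ∃ v₂ ∈ B w₂, G.Adj v₁ v₂

/-- Planarity via Wagner's theorem: no `K₅` minor and no `K₃,₃` minor. -/
def IsPlanar {V : Type*} (G : SimpleGraph V) : Prop :=
  ¬ IsMinor (⊤ : SimpleGraph (Fin 5)) G ∧
  ¬ IsMinor (completeBipartiteGraph (Fin 3) (Fin 3)) G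

section AuxStmt8

lemma mod_window {k : ℕ} (s m n1 n2 : ℕ) (hm : m ≤ k)
    (h1 : s ≤ n1) (h2 : n1 < s+m) (h3 : s ≤ n2) (h4 : n2 < s+m) (h : n1 % k = n2 % k) :
    n1 = n2 := by
  rcases Nat.le_total n1 n2 with hle | hle
  · have hd := (Nat.modEq_iff_dvd' hle).mp h
    rcases Nat.eq_zero_or_pos (n2 - n1) with h0 | h0
    · omega
    · have := Nat.le_of_dvd h0 hd; omega
  · have hd := (Nat.modEq_iff_dvd' hle).mp h.symm
    rcases Nat.eq_zero_or_pos (n1 - n2) with h0 | h0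
    · omega
    · have := Nat.le_of_dvd h0 hd; omega

lemma run_lemma {t : ℕ} {f : ℕ → ℕ}
    (ψ : ℕ → (Fin 2 ⊕ Σ i : Fin t, Fin (f i.1)))
    (hadj : ∀ n, (joinG (⊤ : SimpleGraph (Fin 2)) (pathsUnion t f)).Adj (ψ n) (ψ (n+1)))
    (s m : ℕ) (hm : 1 ≤ m)
    (hright : ∀ n, s ≤ n → n < s + m → ∃ v, ψ n = Sum.inr v) :
    ∃ (j : Fin t) (g : ℕ → Fin (f j.1)),
      ∀ n, s ≤ n → n < s + m → ψ n = Sum.inr ⟨j, g n⟩ := by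
  obtain ⟨v0, hv0⟩ := hright s le_rfl (by omega)
  refine ⟨v0.1, ?_⟩
  have key : ∀ d, d < m → ∃ x : Fin (f v0.1.1), ψ (s+d) = Sum.inr ⟨v0.1, x⟩ := by
    intro d
    induction d with
    | zero => intro _; exact ⟨v0.2, by simpa using hv0⟩
    | succ d ih =>
      intro hd
      obtain ⟨x, hx⟩ := ih (by omega)
      obtain ⟨v, hv⟩ := hright (s+d+1) (by omega) (by omega)
      have hA := hadj (s+d)
      rw [hx, hv] at hA
      have h2 : (pathsUnion t f).Adj ⟨v0.1, x⟩ v := hA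
      have h1 : v0.1 = v.1 := h2.1
      obtain ⟨vj, vx⟩ := v
      dsimp at h1
      subst h1
      exact ⟨vx, by rw [show s + d + 1 = s + (d+1) by omega] at hv; exact hv⟩
  have key2 : ∀ n, s ≤ n → n < s + m → ∃ x : Fin (f v0.1.1), ψ n = Sum.inr ⟨v0.1, x⟩ := by
    intro n h1 h2
    obtain ⟨x, hx⟩ := key (n - s) (by omega)
    rw [show s + (n - s) = n by omega] at hx
    exact ⟨x, hx⟩
  refine ⟨fun n => if h : s ≤ n ∧ n < s + m then (key2 n h.1 h.2).choose else
      (key2 s le_rfl (by omega)).choose, ?_⟩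
  intro n h1 h2
  simp only [dif_pos (And.intro h1 h2)]
  exact (key2 n h1 h2).choose_spec

lemma count_lemma {N : ℕ} (g : ℕ → Fin N) (s m : ℕ)
    (hinj : ∀ n1 n2, s ≤ n1 → n1 < s+m → s ≤ n2 → n2 < s+m → g n1 = g n2 → n1 = n2) :
    m ≤ N := by
  have hI : Function.Injective (fun x : Fin m => g (s + x.1)) := by
    intro x y h
    have := hinj (s+x.1) (s+y.1) (by omega) (by omega) (by omega) (by omega) h
    exact Fin.ext (by omega)
  simpa using Fintype.card_le_of_injective _ hI

lemma count_lemma2 {N : ℕ} (g1 g2 : ℕ → Fin N) (s1 m1 s2 m2 : ℕ)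
    (h11 : ∀ n1 n2, s1 ≤ n1 → n1 < s1+m1 → s1 ≤ n2 → n2 < s1+m1 → g1 n1 = g1 n2 → n1 = n2)
    (h22 : ∀ n1 n2, s2 ≤ n1 → n1 < s2+m2 → s2 ≤ n2 → n2 < s2+m2 → g2 n1 = g2 n2 → n1 = n2)
    (h12 : ∀ n1 n2, s1 ≤ n1 → n1 < s1+m1 → s2 ≤ n2 → n2 < s2+m2 → g1 n1 ≠ g2 n2) :
    m1 + m2 ≤ N := by
  have hI : Function.Injective (fun x : Fin (m1+m2) =>
      if h : x.1 < m1 then g1 (s1 + x.1) else g2 (s2 + (x.1 - m1))) := by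
    intro x y h
    apply Fin.ext
    simp only at h
    split_ifs at h with hx hy hy
    · have := h11 _ _ (by omega) (by omega) (by omega) (by omega) h; omega
    · exact absurd h (h12 _ _ (by omega) (by omega) (by omega) (by omega))
    · exact absurd h.symm (h12 _ _ (by omega) (by omega) (by omega) (by omega))
    · have := h22 _ _ (by omega) (by omega) (by omega) (by omega) h; omega
  simpa using Fintype.card_le_of_injective _ hI

lemma theta_adj_succ {k a : ℕ} (hk : 2 ≤ k) (i : ℕ) (hi : i + 1 < k) :
    (thetaGraph k a).Adj ⟨i, by omega⟩ ⟨i+1, hi⟩ := by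
  rw [thetaGraph, SimpleGraph.fromRel_adj]
  exact ⟨by simp [Fin.ext_iff], Or.inl (Or.inl rfl)⟩

lemma theta_adj_wrap {k a : ℕ} (hk : 2 ≤ k) :
    (thetaGraph k a).Adj ⟨k-1, by omega⟩ ⟨0, by omega⟩ := by
  rw [thetaGraph, SimpleGraph.fromRel_adj]
  exact ⟨by simp [Fin.ext_iff]; omega, Or.inl (Or.inr (Or.inl ⟨rfl, rfl⟩))⟩

lemma antitone_pair_bound {f : ℕ → ℕ} (hf : Antitone f) {j1 j2 m1 m2 : ℕ}
    (hne : j1 ≠ j2) (h1 : m1 ≤ f j1) (h2 : m2 ≤ f j2) : m1 + m2 ≤ f 0 + f 1 := by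
  rcases Nat.lt_or_ge j1 j2 with h | h
  · have := hf (Nat.zero_le j1); have := hf (show 1 ≤ j2 by omega); omega
  · have := hf (Nat.zero_le j2); have := hf (show 1 ≤ j1 by omega); omega

lemma two_apex {k t : ℕ} {f : ℕ → ℕ} (hk : 5 ≤ k) (hf : Antitone f)
    (ψ : ℕ → (Fin 2 ⊕ Σ i : Fin t, Fin (f i.1)))
    (hψinj : ∀ n1 n2, ψ n1 = ψ n2 → n1 % k = n2 % k)
    (hadj : ∀ n, (joinG (⊤ : SimpleGraph (Fin 2)) (pathsUnion t f)).Adj (ψ n) (ψ (n+1)))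
    (p q : ℕ) (hpq : p < q) (hq : q < k)
    (hright : ∀ n, n % k ≠ p → n % k ≠ q → ∃ v, ψ n = Sum.inr v) :
    k - 2 ≤ f 0 + f 1 := by
  set m1 := q - p - 1 with hm1
  set m2 := p + k - q - 1 with hm2
  have hmm : m1 + m2 = k - 2 := by omega
  -- window 1 : [p+1, q) ; all indices < k, mod = self
  have hw1 : ∀ n, p + 1 ≤ n → n < p + 1 + m1 → n % k = n := by
    intro n _ h2; exact Nat.mod_eq_of_lt (by omega)
  have hr1 : ∀ n, p + 1 ≤ n → n < p + 1 + m1 → ∃ v, ψ n = Sum.inr v := by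
    intro n h1 h2; exact hright n (by rw [hw1 n h1 h2]; omega) (by rw [hw1 n h1 h2]; omega)
  -- window 2 : [q+1, p+k)
  have hw2 : ∀ n, q + 1 ≤ n → n < q + 1 + m2 → (n < k ∧ n % k = n) ∨ (k ≤ n ∧ n % k = n - k) := by
    intro n h1 h2
    rcases Nat.lt_or_ge n k with h | h
    · exact Or.inl ⟨h, Nat.mod_eq_of_lt h⟩
    · refine Or.inr ⟨h, ?_⟩
      rw [Nat.mod_eq_sub_mod h, Nat.mod_eq_of_lt (by omega)]
  have hr2 : ∀ n, q + 1 ≤ n → n < q + 1 + m2 → ∃ v, ψ n = Sum.inr v := by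
    intro n h1 h2
    rcases hw2 n h1 h2 with ⟨h, he⟩ | ⟨h, he⟩ <;>
      exact hright n (by rw [he]; omega) (by rw [he]; omega)
  rcases Nat.eq_zero_or_pos m1 with h1 | h1
  · -- single window 2 of size k - 2
    obtain ⟨j, g, hg⟩ := run_lemma ψ hadj (q+1) m2 (by omega) hr2
    have hcnt : m2 ≤ f j.1 := by
      apply count_lemma g (q+1) m2
      intro n1 n2 hn1 hn2 hn3 hn4 he
      refine mod_window (k := k) (q+1) m2 n1 n2 (by omega) hn1 hn2 hn3 hn4 ?_
      exact hψinj n1 n2 (by rw [hg n1 hn1 hn2, hg n2 hn3 hn4, he])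
    have := hf (Nat.zero_le j.1); omega
  rcases Nat.eq_zero_or_pos m2 with h2 | h2
  · obtain ⟨j, g, hg⟩ := run_lemma ψ hadj (p+1) m1 (by omega) hr1
    have hcnt : m1 ≤ f j.1 := by
      apply count_lemma g (p+1) m1
      intro n1 n2 hn1 hn2 hn3 hn4 he
      refine mod_window (k := k) (p+1) m1 n1 n2 (by omega) hn1 hn2 hn3 hn4 ?_
      exact hψinj n1 n2 (by rw [hg n1 hn1 hn2, hg n2 hn3 hn4, he])
    have := hf (Nat.zero_le j.1); omega
  obtain ⟨j1, g1, hg1⟩ := run_lemma ψ hadj (p+1) m1 h1 hr1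
  obtain ⟨j2, g2, hg2⟩ := run_lemma ψ hadj (q+1) m2 h2 hr2
  by_cases hjj : j1 = j2
  · subst hjj
    have hcnt : m1 + m2 ≤ f j1.1 := by
      apply count_lemma2 g1 g2 (p+1) m1 (q+1) m2
      · intro n1 n2 hn1 hn2 hn3 hn4 he
        refine mod_window (k := k) (p+1) m1 n1 n2 (by omega) hn1 hn2 hn3 hn4 ?_
        exact hψinj n1 n2 (by rw [hg1 n1 hn1 hn2, hg1 n2 hn3 hn4, he])
      · intro n1 n2 hn1 hn2 hn3 hn4 he
        refine mod_window (k := k) (q+1) m2 n1 n2 (by omega) hn1 hn2 hn3 hn4 ?_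
        exact hψinj n1 n2 (by rw [hg2 n1 hn1 hn2, hg2 n2 hn3 hn4, he])
      · intro n1 n2 hn1 hn2 hn3 hn4 he
        have hmod := hψinj n1 n2 (by rw [hg1 n1 hn1 hn2, hg2 n2 hn3 hn4, he])
        have e1 := hw1 n1 hn1 hn2
        rcases hw2 n2 hn3 hn4 with ⟨h, he2⟩ | ⟨h, he2⟩ <;> omega
    have := hf (Nat.zero_le j1.1); omega
  · have hcnt1 : m1 ≤ f j1.1 := by
      apply count_lemma g1 (p+1) m1
      intro n1 n2 hn1 hn2 hn3 hn4 he
      refine mod_window (k := k) (p+1) m1 n1 n2 (by omega) hn1 hn2 hn3 hn4 ?_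
      exact hψinj n1 n2 (by rw [hg1 n1 hn1 hn2, hg1 n2 hn3 hn4, he])
    have hcnt2 : m2 ≤ f j2.1 := by
      apply count_lemma g2 (q+1) m2
      intro n1 n2 hn1 hn2 hn3 hn4 he
      refine mod_window (k := k) (q+1) m2 n1 n2 (by omega) hn1 hn2 hn3 hn4 ?_
      exact hψinj n1 n2 (by rw [hg2 n1 hn1 hn2, hg2 n2 hn3 hn4, he])
    have := antitone_pair_bound hf (fun h => hjj (Fin.ext h)) hcnt1 hcnt2
    omega

end AuxStmt8

lemma rev_aux (k t : ℕ) (hk : 5 ≤ k) (ht : 2 ≤ t) (f : ℕ → ℕ) (hf : Antitone f)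
    (hft : ∀ i, 1 ≤ f i ↔ i < t)
    (h : ContainsTheta (joinG (⊤ : SimpleGraph (Fin 2)) (pathsUnion t f)) k) :
    k - 2 ≤ f 0 + f 1 := by
  obtain ⟨a, ha2, hak, φ, hφ⟩ := h
  have hk0 : 0 < k := by omega
  set ψ : ℕ → (Fin 2 ⊕ Σ i : Fin t, Fin (f i.1)) :=
    fun n => φ ⟨n % k, Nat.mod_lt n hk0⟩ with hψdef
  have hψinj : ∀ n1 n2, ψ n1 = ψ n2 → n1 % k = n2 % k := by
    intro n1 n2 h
    simp only [hψdef] at h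
    exact congrArg Fin.val (φ.injective h)
  have hadj : ∀ n, (joinG (⊤ : SimpleGraph (Fin 2)) (pathsUnion t f)).Adj (ψ n) (ψ (n+1)) := by
    intro n
    have hlt : n % k < k := Nat.mod_lt n hk0
    simp only [hψdef]
    rcases Nat.lt_or_ge (n % k + 1) k with hc | hc
    · have h2 : (n+1) % k = n % k + 1 := by
        rw [Nat.add_mod, Nat.mod_eq_of_lt (show 1 < k by omega), Nat.mod_eq_of_lt hc]
      have e2 : (⟨(n+1) % k, Nat.mod_lt (n+1) hk0⟩ : Fin k) = ⟨n % k + 1, hc⟩ := Fin.ext h2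
      rw [e2]
      exact hφ _ _ (theta_adj_succ (a := a) (by omega) (n % k) hc)
    · have hnk : n % k = k - 1 := by omega
      have h2 : (n+1) % k = 0 := by
        rw [Nat.add_mod, Nat.mod_eq_of_lt (show 1 < k by omega), hnk,
          show k - 1 + 1 = k by omega, Nat.mod_self]
      have e1 : (⟨n % k, Nat.mod_lt n hk0⟩ : Fin k) = ⟨k - 1, by omega⟩ := Fin.ext hnk
      have e2 : (⟨(n+1) % k, Nat.mod_lt (n+1) hk0⟩ : Fin k) = ⟨0, by omega⟩ := Fin.ext h2
      rw [e1, e2]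
      exact hφ _ _ (theta_adj_wrap (a := a) (by omega))
  by_cases hA0 : ∀ i : Fin k, ∃ v, φ i = Sum.inr v
  · obtain ⟨j, g, hg⟩ := run_lemma ψ hadj 0 k (by omega) (fun n _ _ => hA0 _)
    have hcnt : k ≤ f j.1 := by
      apply count_lemma g 0 k
      intro n1 n2 hn1 hn2 hn3 hn4 he
      refine mod_window (k := k) 0 k n1 n2 le_rfl hn1 hn2 hn3 hn4 ?_
      exact hψinj n1 n2 (by rw [hg n1 hn1 hn2, hg n2 hn3 hn4, he])
    have := hf (Nat.zero_le j.1); omega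
  push_neg at hA0
  obtain ⟨p, hp⟩ := hA0
  obtain ⟨x0, hx0⟩ : ∃ x, φ p = Sum.inl x := by
    cases hv : φ p with
    | inl x => exact ⟨x, rfl⟩
    | inr v => exact absurd hv (hp v)
  by_cases hB : ∀ i : Fin k, i ≠ p → ∃ v, φ i = Sum.inr v
  · have hrB : ∀ n, p.1 + 1 ≤ n → n < p.1 + 1 + (k-1) → ∃ v, ψ n = Sum.inr v := by
      intro n h1 h2
      simp only [hψdef]
      apply hB
      intro hcon
      have hcv : n % k = p.1 := congrArg Fin.val hcon
      have hpk := p.isLt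
      rcases Nat.lt_or_ge n k with h | h
      · rw [Nat.mod_eq_of_lt h] at hcv; omega
      · rw [Nat.mod_eq_sub_mod h, Nat.mod_eq_of_lt (by omega)] at hcv; omega
    obtain ⟨j, g, hg⟩ := run_lemma ψ hadj (p.1+1) (k-1) (by omega) hrB
    have hcnt : k - 1 ≤ f j.1 := by
      apply count_lemma g (p.1+1) (k-1)
      intro n1 n2 hn1 hn2 hn3 hn4 he
      refine mod_window (k := k) (p.1+1) (k-1) n1 n2 (by omega) hn1 hn2 hn3 hn4 ?_
      exact hψinj n1 n2 (by rw [hg n1 hn1 hn2, hg n2 hn3 hn4, he])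
    have := hf (Nat.zero_le j.1); omega
  push_neg at hB
  obtain ⟨q, hqp, hq⟩ := hB
  obtain ⟨x1, hx1⟩ : ∃ x, φ q = Sum.inl x := by
    cases hv : φ q with
    | inl x => exact ⟨x, rfl⟩
    | inr v => exact absurd hv (hq v)
  have hx01 : x0 ≠ x1 := by
    intro h
    exact hqp (φ.injective (by rw [hx0, hx1, h])).symm
  have hPQ : ∀ i : Fin k, i ≠ p → i ≠ q → ∃ v, φ i = Sum.inr v := by
    intro i hip hiq
    cases hv : φ i with
    | inr v => exact ⟨v, rfl⟩
    | inl z =>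
      exfalso
      have hz : z = x0 ∨ z = x1 := by
        have hd : ∀ a b c : Fin 2, b ≠ c → a = b ∨ a = c := by decide
        exact hd z x0 x1 hx01
      rcases hz with h | h
      · exact hip (φ.injective (by rw [hv, hx0, h]))
      · exact hiq (φ.injective (by rw [hv, hx1, h]))
  have hrPQ : ∀ n, n % k ≠ p.1 → n % k ≠ q.1 → ∃ v, ψ n = Sum.inr v := by
    intro n h1 h2
    simp only [hψdef]
    exact hPQ ⟨n % k, Nat.mod_lt n hk0⟩ (fun h => h1 (congrArg Fin.val h))
      (fun h => h2 (congrArg Fin.val h))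
  have hne : p.1 ≠ q.1 := fun h => hqp (Fin.ext h).symm
  rcases Nat.lt_or_ge p.1 q.1 with h | h
  · exact two_apex hk hf ψ hψinj hadj p.1 q.1 h q.isLt hrPQ
  · exact two_apex hk hf ψ hψinj hadj q.1 p.1 (by omega) p.isLt (fun n h1 h2 => hrPQ n h2 h1)

lemma construct_theta (k t : ℕ) (hk : 5 ≤ k) (ht : 2 ≤ t) (f : ℕ → ℕ)
    (hft : ∀ i, 1 ≤ f i ↔ i < t) (hsum : k - 2 ≤ f 0 + f 1) :
    ContainsTheta (joinG (⊤ : SimpleGraph (Fin 2)) (pathsUnion t f)) k := by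
  have hf1 : 1 ≤ f 1 := (hft 1).mpr (by omega)
  have hf0 : 1 ≤ f 0 := (hft 0).mpr (by omega)
  have ht0 : 0 < t := by omega
  have ht1 : 1 < t := by omega
  obtain ⟨p1, hp1def⟩ : ∃ p1, p1 = min (f 1) (k - 3) := ⟨_, rfl⟩
  have hp1a : p1 ≤ f 1 := by omega
  have hp1b : p1 ≤ k - 3 := by omega
  have hp1c : 1 ≤ p1 := by omega
  obtain ⟨p0, hp0def⟩ : ∃ p0, p0 = k - 2 - p1 := ⟨_, rfl⟩
  have hp0a : 1 ≤ p0 := by omega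
  have hp0b : p0 ≤ f 0 := by omega
  have hp01 : p0 + p1 = k - 2 := by omega
  clear hp0def hp1def hsum
  set F : Fin k → (Fin 2 ⊕ Σ i : Fin t, Fin (f i.1)) := fun i =>
    if i.1 = 0 then Sum.inl 0
    else if h2 : i.1 ≤ p0 then Sum.inr ⟨⟨0, ht0⟩, ⟨i.1 - 1, by show i.1 - 1 < f 0; omega⟩⟩
    else if i.1 = p0 + 1 then Sum.inl 1
    else Sum.inr ⟨⟨1, ht1⟩, ⟨i.1 - p0 - 2, by show i.1 - p0 - 2 < f 1; have := i.2; omega⟩⟩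
    with hF
  have hinj : Function.Injective F := by
    intro i j hij
    apply Fin.ext
    simp only [hF] at hij
    split_ifs at hij <;>
      (try simp [Fin.ext_iff] at hij) <;> omega
  have key : ∀ a b : Fin k,
      ((b.1 : ℕ) = a.1 + 1 ∨ (a.1 = k - 1 ∧ b.1 = 0) ∨ (a.1 = 0 ∧ b.1 = p0 + 1)) →
      (joinG (⊤ : SimpleGraph (Fin 2)) (pathsUnion t f)).Adj (F a) (F b) := by
    intro a b hrel
    have hak := a.isLt
    have hbk := b.isLt
    simp only [hF]
    split_ifs <;>
      first
        | trivial
        | exact (show (⊤ : SimpleGraph (Fin 2)).Adj 0 1 by simp)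
        | exact ⟨rfl, by simp only [Fin.val_mk]; omega⟩
        | (exfalso; omega)
  refine ⟨p0 + 1, by omega, by omega, ⟨F, hinj⟩, ?_⟩
  intro a b hab
  simp only [thetaGraph, SimpleGraph.fromRel_adj] at hab
  rcases hab.2 with h | h
  · exact key a b h
  · exact (key b a h).symm

theorem stmt8 (k t : ℕ) (hk : 5 ≤ k) (ht : 2 ≤ t) (f : ℕ → ℕ) (hf : Antitone f)
    (hft : ∀ i, 1 ≤ f i ↔ i < t) :
    (¬ ContainsTheta (joinG (⊤ : SimpleGraph (Fin 2)) (pathsUnion t f)) k) ↔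
      f 0 + f 1 ≤ k - 3 := by
  constructor
  · intro hnc
    by_contra hgt
    exact hnc (construct_theta k t hk ht f hft (by omega))
  · intro hsum hC
    have := rev_aux k t hk ht f hf hft hC
    omega
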